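/- Under a progressive wealth tax, the optimal risky share w* = w_neutral·(W + H_τ)/W with tax shield H_τ = R_j/(r_f - τ_j) > 0 strictly exceeds the proportional-tax benchmark w_neutral, and the relative distortion H_τ/W is strictly decreasing in W and vanishes as W → ∞. -/
import Mathlib


/-- The progressive tax shield raises the risky share above the neutral benchmark;
the relative distortion is strictly decreasing and vanishes at infinity. -/
theorem progressive_tax_shield
    (wn Rj r_f τj : ℝ) (hwn : wn > 0) (hR : Rj > 0) (hτ : 0 ≤ τj) (hr : τj < r_f) :
    (0 < Rj / (r_f - τj))
    ∧ (∀ W : ℝ, W > 0 → wn < wn * (1 + (Rj / (r_f - τj)) / W))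
    ∧ (∀ W₁ W₂ : ℝ, 0 < W₁ → W₁ < W₂ →
        (Rj / (r_f - τj)) / W₂ < (Rj / (r_f - τj)) / W₁)
    ∧ Filter.Tendsto (fun W : ℝ => (Rj / (r_f - τj)) / W) Filter.atTop (nhds 0) := by
  have hH : 0 < Rj / (r_f - τj) := div_pos hR (by linarith)
  refine ⟨hH, ?_, ?_, ?_⟩
  · intro W hW
    nlinarith [div_pos hH hW]
  · intro W₁ W₂ h1 h12
    exact div_lt_div_of_pos_left hH h1 h12
  · simpa using tendsto_const_nhds.div_atTop (Filter.tendsto_id (α := ℝ))
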